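/- Let E be a real normed vector space, let H, I : E → ℝ be Fréchet differentiable, let U ⊆ ℝ be an open interval, and let φ : ℝ → E be differentiable on U. Assume that for every c ∈ U the wave profile φ(c) is a critical point of H − c·I, i.e. the Fréchet derivative satisfies DH(φ(c)) = c • DI(φ(c)) as continuous linear maps E → ℝ. Define the moment of instability m : ℝ → ℝ by m(c) := H(φ(c)) − c·I(φ(c)). Then m is differentiable on U and m′(c) = −I(φ(c)) for every c ∈ U. -/

import Mathlib

/-- The moment of instability `m(c) = H(φ(c)) - c·I(φ(c))` of a family of
solitary-wave profiles `φ(c)` that are critical points of `H - c·I`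
is differentiable on the open interval of speeds, with `m'(c) = -I(φ(c))`. -/
theorem moment_of_instability_deriv
    (E : Type*) [NormedAddCommGroup E] [NormedSpace ℝ E]
    (H I : E → ℝ) (hH : Differentiable ℝ H) (hI : Differentiable ℝ I)
    (a b : ℝ) (φ : ℝ → E)
    (hφ : DifferentiableOn ℝ φ (Set.Ioo a b))
    (hcrit : ∀ c ∈ Set.Ioo a b, fderiv ℝ H (φ c) = c • fderiv ℝ I (φ c))
    (m : ℝ → ℝ) (hm : ∀ c, m c = H (φ c) - c * I (φ c)) :
    ∀ c ∈ Set.Ioo a b, HasDerivAt m (-(I (φ c))) c := by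
  intro c hc
  have hφc : DifferentiableAt ℝ φ c := hφ.differentiableAt (isOpen_Ioo.mem_nhds hc)
  have hφ' : HasDerivAt φ (deriv φ c) c := hφc.hasDerivAt
  have hH' : HasDerivAt (fun x => H (φ x)) (fderiv ℝ H (φ c) (deriv φ c)) c :=
    (hH.differentiableAt.hasFDerivAt).comp_hasDerivAt c hφ'
  have hI' : HasDerivAt (fun x => I (φ x)) (fderiv ℝ I (φ c) (deriv φ c)) c :=
    (hI.differentiableAt.hasFDerivAt).comp_hasDerivAt c hφ'
  have hprod : HasDerivAt (fun x => x * I (φ x))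
      (1 * I (φ c) + c * fderiv ℝ I (φ c) (deriv φ c)) c :=
    (hasDerivAt_id c).mul hI'
  have hsub := hH'.sub hprod
  have heq : m = fun x => H (φ x) - x * I (φ x) := funext fun x => hm x
  rw [heq]
  convert hsub using 1
  · rfl
  · rfl
  · rfl
  rw [hcrit c hc]
  simp
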